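/- arXiv:2602.06525 — 3 statements merged into one kernel-verified Lean document; each statement's English description precedes it below -/
import Mathlib

section
/- Suppose each controller keeps C_i invariant and additionally there is a uniform horizon h ≥ 1 such that for every i and every x_t ∈ Ω_i, the trajectory satisfies x_{t+h} ∉ Ω_i. Then from any initial state the trajectory enters S₀ within n·h steps, where n is the number of operating regions. -/
theorem stmt4 {X U : Type*} (n : ℕ) (f : X → U → X) (π : ℕ → X → U)
    (Ω : ℕ → Set X) (S0 : Set X) (C : ℕ → Set X)
    (hC : ∀ i, C i = (⋃ j ∈ Finset.Icc 1 n, ⋃ _ : i ≤ j, Ω j) ∪ S0)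
    (hcover : ∀ x : X, x ∈ S0 ∨ ∃ i ∈ Finset.Icc 1 n, x ∈ Ω i)
    (hdisjS : ∀ i ∈ Finset.Icc 1 n, Disjoint (Ω i) S0)
    (hdisj : ∀ i ∈ Finset.Icc 1 n, ∀ j ∈ Finset.Icc 1 n, i ≠ j → Disjoint (Ω i) (Ω j))
    (hinv : ∀ i ∈ Finset.Icc 1 n, ∀ x ∈ Ω i, f x (π i x) ∈ C i)
    (traj : ℕ → X)
    (hstep : ∀ t i, i ∈ Finset.Icc 1 n → traj t ∈ Ω i →
      traj (t + 1) = f (traj t) (π i (traj t)))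
    (habs : ∀ t, traj t ∈ S0 → traj (t + 1) = traj t)
    (h : ℕ) (hh : 1 ≤ h)
    (hhor : ∀ t, ∀ i ∈ Finset.Icc 1 n, traj t ∈ Ω i → traj (t + h) ∉ Ω i) :
    ∃ t ≤ n * h, traj t ∈ S0 := by
  -- S0 is absorbing
  have habs' : ∀ t s, traj t ∈ S0 → traj (t + s) ∈ S0 := by
    intro t s ht
    induction s with
    | zero => exact ht
    | succ s ih => rw [← Nat.add_assoc, habs _ ih]; exact ih
  -- one step: from Ω i we land in S0 or some Ω j with i ≤ j
  have hone : ∀ t i, i ∈ Finset.Icc 1 n → traj t ∈ Ω i →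
      traj (t + 1) ∈ S0 ∨ ∃ j ∈ Finset.Icc 1 n, i ≤ j ∧ traj (t + 1) ∈ Ω j := by
    intro t i hi hti
    have := hinv i hi _ hti
    rw [hC i] at this
    rw [← hstep t i hi hti] at this
    rcases this with hmem | hS
    · simp only [Set.mem_iUnion] at hmem
      obtain ⟨j, hj, hij, hmem⟩ := hmem
      exact Or.inr ⟨j, hj, hij, hmem⟩
    · exact Or.inl hS
  -- many steps monotone
  have hmono : ∀ t i, i ∈ Finset.Icc 1 n → traj t ∈ Ω i → ∀ s,
      traj (t + s) ∈ S0 ∨ ∃ j ∈ Finset.Icc 1 n, i ≤ j ∧ traj (t + s) ∈ Ω j := by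
    intro t i hi hti s
    induction s with
    | zero => exact Or.inr ⟨i, hi, le_refl i, hti⟩
    | succ s ih =>
      rcases ih with hS | ⟨j, hj, hij, hmem⟩
      · exact Or.inl (by rw [← Nat.add_assoc]; exact habs' _ 1 hS)
      · rcases hone (t + s) j hj hmem with hS | ⟨k, hk, hjk, hmem'⟩
        · exact Or.inl (by rw [← Nat.add_assoc]; exact hS)
        · exact Or.inr ⟨k, hk, le_trans hij hjk, by rw [← Nat.add_assoc]; exact hmem'⟩
  -- main induction
  have key : ∀ k, traj (k * h) ∈ S0 ∨
      ∃ j ∈ Finset.Icc 1 n, k + 1 ≤ j ∧ traj (k * h) ∈ Ω j := by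
    intro k
    induction k with
    | zero =>
      rcases hcover (traj 0) with hS | ⟨i, hi, hmem⟩
      · exact Or.inl (by simpa using hS)
      · exact Or.inr ⟨i, hi, (Finset.mem_Icc.mp hi).1, by simpa using hmem⟩
    | succ k ih =>
      have heq : (k + 1) * h = k * h + h := by ring
      rcases ih with hS | ⟨j, hj, hkj, hmem⟩
      · exact Or.inl (by rw [heq]; exact habs' _ h hS)
      · rcases hmono (k * h) j hj hmem h with hS | ⟨j', hj', hjj', hmem'⟩
        · exact Or.inl (by rw [heq]; exact hS)
        · have hne : j ≠ j' := by
            rintro rfl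
            exact hhor (k * h) j hj hmem hmem'
          have : j + 1 ≤ j' := lt_of_le_of_ne hjj' hne
          exact Or.inr ⟨j', hj', by omega, by rw [heq]; exact hmem'⟩
  refine ⟨n * h, le_refl _, ?_⟩
  rcases key n with hS | ⟨j, hj, hnj, _⟩
  · exact hS
  · have := (Finset.mem_Icc.mp hj).2; omega
end

section
/- Suppose V satisfies the undiscounted feasibility Bellman equation V(x) = min(l(x), max_u V(f(x,u))) and l(x) > 0 ⟺ x ∈ K. Then any trajectory x_{t+1} = f(x_t, u_t) with actions chosen so that V(f(x_t, u_t)) ≥ V(x_t) at every step, starting from x₀ with V(x₀) > 0, remains in K for all time. -/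
theorem stmt13 {X U : Type*} [Fintype U] [Nonempty U]
    (f : X → U → X) (K : Set X) (l : X → ℝ)
    (hK : ∀ x, 0 < l x ↔ x ∈ K)
    (V : X → ℝ)
    (hV : ∀ x, V x = min (l x)
      (Finset.univ.sup' Finset.univ_nonempty (fun u => V (f x u))))
    (x : ℕ → X) (u : ℕ → U)
    (hstep : ∀ t, x (t + 1) = f (x t) (u t))
    (hfeas : ∀ t, V (x t) ≤ V (f (x t) (u t)))
    (h0 : 0 < V (x 0)) :
    ∀ t, x t ∈ K := by
  have hpos : ∀ t, 0 < V (x t) := by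
    intro t
    induction t with
    | zero => exact h0
    | succ n ih =>
      rw [hstep n]
      exact lt_of_lt_of_le ih (hfeas n)
  intro t
  have hle : V (x t) ≤ l (x t) := by
    rw [hV (x t)]; exact min_le_left _ _
  exact (hK (x t)).mp (lt_of_lt_of_le (hpos t) hle)
end

section
/- Let V_γ denote the unique bounded fixed point of the discounted feasibility operator with parameter γ, and suppose l is bounded with ‖l‖_∞ = M. Then for γ, γ' ∈ [0,1), ‖V_γ − V_{γ'}‖_∞ ≤ 2M·|γ − γ'| / (1 − max(γ, γ')). -/
private lemma min_key (a b c : ℝ) : min a b ≤ min a c + |b - c| := by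
  rcases le_total a c with h | h
  · rw [min_eq_left h]
    exact le_add_of_le_of_nonneg (min_le_left _ _) (abs_nonneg _)
  · rw [min_eq_right h]
    have := le_abs_self (b - c)
    have := min_le_right a b
    linarith

private lemma abs_min_sub_min (a b c : ℝ) : |min a b - min a c| ≤ |b - c| := by
  rw [abs_sub_le_iff]
  refine ⟨by have := min_key a b c; linarith, ?_⟩
  have := min_key a c b
  rw [abs_sub_comm] at this
  linarith

private lemma fixed_bound {X U : Type*} [Fintype U] [Nonempty U] (x0 : X)
    (f : X → U → X) (l : X → ℝ) (M : ℝ) (hM : ∀ x, |l x| ≤ M)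
    (γ : ℝ) (hγ0 : 0 ≤ γ) (hγ1 : γ < 1) (V : X → ℝ)
    (hVb : ∃ B, ∀ x, |V x| ≤ B)
    (hV : ∀ x, V x = (1 - γ) * l x +
      γ * min (l x) (Finset.univ.sup' Finset.univ_nonempty (fun u => V (f x u)))) :
    ∀ x, |V x| ≤ M := by
  obtain ⟨B0, hB0⟩ := hVb
  set BV := sSup (Set.range fun x => |V x|) with hBVdef
  have hbdd : BddAbove (Set.range fun x => |V x|) := ⟨B0, by rintro _ ⟨x, rfl⟩; exact hB0 x⟩
  have hne : (Set.range fun x => |V x|).Nonempty := ⟨|V x0|, ⟨x0, rfl⟩⟩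
  have hle : ∀ x, |V x| ≤ BV := fun x => le_csSup hbdd ⟨x, rfl⟩
  have hMnn : 0 ≤ M := (abs_nonneg _).trans (hM x0)
  have step : BV ≤ (1 - γ) * M + γ * max M BV := by
    apply csSup_le hne
    rintro _ ⟨x, rfl⟩
    show |V x| ≤ _
    rw [hV x]
    set S := Finset.univ.sup' Finset.univ_nonempty (fun u => V (f x u)) with hS
    have hminabs : |min (l x) S| ≤ max M BV := by
      rw [abs_le]
      constructor
      · apply le_min
        · have := (abs_le.mp (hM x)).1
          have : -(max M BV) ≤ -M := by simp [le_max_left]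
          linarith [(abs_le.mp (hM x)).1]
        · have hS0 : V (f x (Classical.arbitrary U)) ≤ S :=
            Finset.le_sup' (fun u => V (f x u)) (Finset.mem_univ (Classical.arbitrary U))
          have := (abs_le.mp (hle (f x (Classical.arbitrary U)))).1
          have : -(max M BV) ≤ -BV := by simp [le_max_right]
          linarith [(abs_le.mp (hle (f x (Classical.arbitrary U)))).1]
      · exact le_trans (min_le_left _ _) (le_trans (le_abs_self _) ((hM x).trans (le_max_left _ _)))
    calc |(1 - γ) * l x + γ * min (l x) S| ≤ |(1 - γ) * l x| + |γ * min (l x) S| := abs_add_le _ _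
      _ = (1 - γ) * |l x| + γ * |min (l x) S| := by
          rw [abs_mul, abs_mul, abs_of_nonneg (by linarith : (0:ℝ) ≤ 1 - γ), abs_of_nonneg hγ0]
      _ ≤ (1 - γ) * M + γ * max M BV := by
          have h1 : (1 - γ) * |l x| ≤ (1 - γ) * M :=
            mul_le_mul_of_nonneg_left (hM x) (by linarith)
          have h2 : γ * |min (l x) S| ≤ γ * max M BV :=
            mul_le_mul_of_nonneg_left hminabs hγ0
          linarith
  have hBVM : BV ≤ M := by
    rcases le_total BV M with h | h
    · exact h
    · rw [max_eq_right h] at step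
      nlinarith
  exact fun x => (hle x).trans hBVM

theorem stmt16 {X U : Type*} [Fintype U] [Nonempty U]
    (f : X → U → X) (l : X → ℝ) (M : ℝ) (hM : ∀ x, |l x| ≤ M)
    (γ γ' : ℝ) (hγ0 : 0 ≤ γ) (hγ1 : γ < 1) (hγ'0 : 0 ≤ γ') (hγ'1 : γ' < 1)
    (V V' : X → ℝ)
    (hVb : ∃ B, ∀ x, |V x| ≤ B) (hV'b : ∃ B, ∀ x, |V' x| ≤ B)
    (hV : ∀ x, V x = (1 - γ) * l x +
      γ * min (l x) (Finset.univ.sup' Finset.univ_nonempty (fun u => V (f x u))))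
    (hV' : ∀ x, V' x = (1 - γ') * l x +
      γ' * min (l x) (Finset.univ.sup' Finset.univ_nonempty (fun u => V' (f x u)))) :
    ∀ x, |V x - V' x| ≤ 2 * M * |γ - γ'| / (1 - max γ γ') := by
  intro x0
  have hVM := fixed_bound x0 f l M hM γ hγ0 hγ1 V hVb hV
  have hV'M := fixed_bound x0 f l M hM γ' hγ'0 hγ'1 V' hV'b hV'
  have hMnn : 0 ≤ M := (abs_nonneg _).trans (hM x0)
  set m := max γ γ' with hm
  have hm1 : m < 1 := max_lt hγ1 hγ'1
  have hm0 : 0 ≤ m := hγ0.trans (le_max_left _ _)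
  set D := sSup (Set.range fun x => |V x - V' x|) with hD
  have hbdd : BddAbove (Set.range fun x => |V x - V' x|) := by
    refine ⟨2 * M, ?_⟩
    rintro _ ⟨x, rfl⟩
    have := abs_sub (V x) (V' x)
    calc |V x - V' x| ≤ |V x| + |V' x| := abs_sub _ _
      _ ≤ 2 * M := by linarith [hVM x, hV'M x]
  have hne : (Set.range fun x => |V x - V' x|).Nonempty := ⟨_, ⟨x0, rfl⟩⟩
  have hleD : ∀ x, |V x - V' x| ≤ D := fun x => le_csSup hbdd ⟨x, rfl⟩
  have hD0 : 0 ≤ D := (abs_nonneg _).trans (hleD x0)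
  -- key contraction inequality
  have key : D ≤ 2 * M * |γ - γ'| + m * D := by
    apply csSup_le hne
    rintro _ ⟨x, rfl⟩
    set S := Finset.univ.sup' Finset.univ_nonempty (fun u => V (f x u)) with hSdef
    set S' := Finset.univ.sup' Finset.univ_nonempty (fun u => V' (f x u)) with hS'def
    have hSS' : |S - S'| ≤ D := by
      rw [abs_sub_le_iff]
      constructor
      · have : S ≤ S' + D := by
          apply Finset.sup'_le
          intro u _
          have h := (abs_sub_le_iff.mp (hleD (f x u))).1
          have : V' (f x u) ≤ S' := Finset.le_sup' (fun u => V' (f x u)) (Finset.mem_univ u)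
          linarith
        linarith
      · have : S' ≤ S + D := by
          apply Finset.sup'_le
          intro u _
          have h := (abs_sub_le_iff.mp (hleD (f x u))).2
          have : V (f x u) ≤ S := Finset.le_sup' (fun u => V (f x u)) (Finset.mem_univ u)
          linarith
        linarith
    have hminS : |min (l x) S| ≤ M := by
      rw [abs_le]
      constructor
      · apply le_min
        · linarith [(abs_le.mp (hM x)).1]
        · have hS0 : V (f x (Classical.arbitrary U)) ≤ S :=
            Finset.le_sup' (fun u => V (f x u)) (Finset.mem_univ (Classical.arbitrary U))
          linarith [(abs_le.mp (hVM (f x (Classical.arbitrary U)))).1]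
      · exact le_trans (min_le_left _ _) (le_trans (le_abs_self _) (hM x))
    have hminmin : |min (l x) S - min (l x) S'| ≤ D := (abs_min_sub_min _ _ _).trans hSS'
    show |V x - V' x| ≤ _
    have hdecomp : V x - V' x =
        (γ' - γ) * l x + (γ - γ') * min (l x) S + γ' * (min (l x) S - min (l x) S') := by
      rw [hV x, hV' x]; ring
    rw [hdecomp]
    have h1 : |(γ' - γ) * l x| ≤ |γ - γ'| * M := by
      rw [abs_mul, abs_sub_comm]
      exact mul_le_mul_of_nonneg_left (hM x) (abs_nonneg _)
    have h2 : |(γ - γ') * min (l x) S| ≤ |γ - γ'| * M := by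
      rw [abs_mul]
      exact mul_le_mul_of_nonneg_left hminS (abs_nonneg _)
    have h3 : |γ' * (min (l x) S - min (l x) S')| ≤ m * D := by
      rw [abs_mul, abs_of_nonneg hγ'0]
      exact mul_le_mul (le_max_right _ _) hminmin (abs_nonneg _) hm0
    calc |(γ' - γ) * l x + (γ - γ') * min (l x) S + γ' * (min (l x) S - min (l x) S')|
        ≤ |(γ' - γ) * l x + (γ - γ') * min (l x) S| + |γ' * (min (l x) S - min (l x) S')| :=
          abs_add_le _ _
      _ ≤ |(γ' - γ) * l x| + |(γ - γ') * min (l x) S| + |γ' * (min (l x) S - min (l x) S')| := by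
          linarith [abs_add_le ((γ' - γ) * l x) ((γ - γ') * min (l x) S)]
      _ ≤ 2 * M * |γ - γ'| + m * D := by linarith
  have hfin : D ≤ 2 * M * |γ - γ'| / (1 - m) := by
    rw [le_div_iff₀ (by linarith : (0:ℝ) < 1 - m)]
    nlinarith
  exact (hleD x0).trans hfin
end
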